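/- If (W, R) is a reflexive, transitive and strongly convergent frame, then the derived belief relation R_B is transitive. -/
import Mathlib

def RB {W : Type*} (R : W → W → Prop) (w u : W) : Prop := ∀ v, R w v → R v u

theorem RB_transitive {W : Type*} [Nonempty W] (R : W → W → Prop)
    (hrefl : ∀ w, R w w) (htrans : ∀ w v u, R w v → R v u → R w u)
    (hconv : ∀ w, ∃ u, ∀ v, R w v → R v u) :
    ∀ w v u, RB R w v → RB R v u → RB R w u := by
  intro w v u h1 h2 x hwx
  exact htrans x v u (h1 x hwx) (h2 v (hrefl v))
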